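/- Let A, B be real symmetric n×n matrices that are SDC with at least one of A, B nonsingular. Then the set {μ ∈ ℝ : A + μB ≻ 0} is nonempty if and only if {μ ∈ ℝ : A + μB ⪰ 0} contains more than one point. -/

import Mathlib

open Matrix

private lemma conj_posDef {n : ℕ} {M : Matrix (Fin n) (Fin n) ℝ} (hM : M.PosDef)
    (P : Matrix (Fin n) (Fin n) ℝ) (hP : IsUnit P.det) : (Pᵀ * M * P).PosDef := by
  rw [← Matrix.conjTranspose_eq_transpose_of_trivial]
  refine Matrix.PosDef.of_dotProduct_mulVec_pos (Matrix.isHermitian_conjTranspose_mul_mul P hM.1) fun x hx => ?_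
  have hinj := (Matrix.mulVec_injective_iff_isUnit (A := P)).2 ((Matrix.isUnit_iff_isUnit_det P).2 hP)
  have hPx : P *ᵥ x ≠ 0 := fun h => hx (hinj (by simp [h]))
  simpa only [star_mulVec, dotProduct_mulVec, vecMul_vecMul] using hM.dotProduct_mulVec_pos hPx

private lemma conj_simp {n : ℕ} (M P : Matrix (Fin n) (Fin n) ℝ) (hP : IsUnit P.det) :
    (P⁻¹)ᵀ * (Pᵀ * M * P) * P⁻¹ = M := by
  have hPt : IsUnit (Pᵀ).det := by rwa [Matrix.det_transpose]
  rw [Matrix.transpose_nonsing_inv, ← Matrix.mul_assoc,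
    Matrix.mul_nonsing_inv_cancel_right _ _ hP, Matrix.nonsing_inv_mul_cancel_left _ _ hPt]

private lemma isUnit_inv_det {n : ℕ} (P : Matrix (Fin n) (Fin n) ℝ) (hP : IsUnit P.det) :
    IsUnit (P⁻¹).det := by
  rw [Matrix.det_nonsing_inv]
  simpa [isUnit_iff_ne_zero, Ring.inverse_eq_inv'] using hP

private lemma conj_posDef_iff {n : ℕ} (M P : Matrix (Fin n) (Fin n) ℝ) (hP : IsUnit P.det) :
    (Pᵀ * M * P).PosDef ↔ M.PosDef := by
  refine ⟨fun h => ?_, fun h => conj_posDef h P hP⟩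
  have := conj_posDef h P⁻¹ (isUnit_inv_det P hP)
  rwa [conj_simp M P hP] at this

private lemma conj_posSemidef_iff {n : ℕ} (M P : Matrix (Fin n) (Fin n) ℝ) (hP : IsUnit P.det) :
    (Pᵀ * M * P).PosSemidef ↔ M.PosSemidef := by
  constructor
  · intro h
    have := h.conjTranspose_mul_mul_same P⁻¹
    rwa [Matrix.conjTranspose_eq_transpose_of_trivial, conj_simp M P hP] at this
  · intro h
    have := h.conjTranspose_mul_mul_same P
    rwa [Matrix.conjTranspose_eq_transpose_of_trivial] at this

/-- For SDC symmetric A, B with A or B nonsingular: {μ : A+μB ≻ 0} is nonempty iff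
{μ : A+μB ⪰ 0} has more than one point. -/
theorem pd_nonempty_iff_psd_more_than_one_point {n : ℕ}
    (A B : Matrix (Fin n) (Fin n) ℝ) (hA : A.IsSymm) (hB : B.IsSymm)
    (hsdc : ∃ P : Matrix (Fin n) (Fin n) ℝ, IsUnit P.det ∧
      (Pᵀ * A * P).IsDiag ∧ (Pᵀ * B * P).IsDiag)
    (hinv : IsUnit A.det ∨ IsUnit B.det) :
    {μ : ℝ | (A + μ • B).PosDef}.Nonempty ↔
      ∃ μ₁ μ₂ : ℝ, μ₁ ≠ μ₂ ∧ (A + μ₁ • B).PosSemidef ∧ (A + μ₂ • B).PosSemidef := by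
  obtain ⟨P, hP, hDA, hDB⟩ := hsdc
  set a : Fin n → ℝ := (Pᵀ * A * P).diag with ha
  set b : Fin n → ℝ := (Pᵀ * B * P).diag with hb
  have key : ∀ μ : ℝ, Pᵀ * (A + μ • B) * P = diagonal (fun i => a i + μ * b i) := by
    intro μ
    have : Pᵀ * (A + μ • B) * P = (Pᵀ * A * P) + μ • (Pᵀ * B * P) := by
      rw [Matrix.mul_add, Matrix.add_mul, Matrix.mul_smul, Matrix.smul_mul]
    rw [this, ← hDA.diagonal_diag, ← hDB.diagonal_diag, ← ha, ← hb]
    ext i j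
    rcases eq_or_ne i j with rfl | hij
    · simp [Matrix.diagonal_apply_eq]
    · simp [Matrix.diagonal_apply_ne _ hij]
  have hpd : ∀ μ : ℝ, (A + μ • B).PosDef ↔ ∀ i, 0 < a i + μ * b i := by
    intro μ
    rw [← conj_posDef_iff _ P hP, key μ, Matrix.posDef_diagonal_iff]
  have hpsd : ∀ μ : ℝ, (A + μ • B).PosSemidef ↔ ∀ i, 0 ≤ a i + μ * b i := by
    intro μ
    rw [← conj_posSemidef_iff _ P hP, key μ, Matrix.posSemidef_diagonal_iff]
  constructor
  · rintro ⟨μ, hμ⟩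
    rw [Set.mem_setOf_eq, hpd] at hμ
    have hopen : IsOpen {t : ℝ | ∀ i, 0 < a i + t * b i} := by
      have : {t : ℝ | ∀ i, 0 < a i + t * b i} = ⋂ i, {t : ℝ | 0 < a i + t * b i} := by
        ext t; simp
      rw [this]
      exact isOpen_iInter_of_finite fun i =>
        isOpen_lt continuous_const (by continuity)
    obtain ⟨ε, hε, hball⟩ := Metric.isOpen_iff.1 hopen μ hμ
    refine ⟨μ, μ + ε / 2, by linarith, (hpsd μ).2 fun i => (hμ i).le, (hpsd _).2 fun i => ?_⟩
    have : μ + ε / 2 ∈ Metric.ball μ ε := by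
      rw [Metric.mem_ball, Real.dist_eq, show μ + ε / 2 - μ = ε / 2 by ring,
        abs_of_pos (by linarith)]
      linarith
    exact (hball this i).le
  · rintro ⟨μ₁, μ₂, hne, h₁, h₂⟩
    rw [hpsd] at h₁ h₂
    have hdet : ∀ i, a i ≠ 0 ∨ b i ≠ 0 := by
      have hdetconj : ∀ M : Matrix (Fin n) (Fin n) ℝ, M.IsDiag →
          IsUnit M.det → ∀ i, M.diag i ≠ 0 := by
        intro M hMdiag hMdet i
        rw [← hMdiag.diagonal_diag, Matrix.det_diagonal, isUnit_iff_ne_zero] at hMdet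
        exact fun h => hMdet (Finset.prod_eq_zero (Finset.mem_univ i) h)
      rcases hinv with h | h
      · have : IsUnit (Pᵀ * A * P).det := by
          rw [Matrix.det_mul, Matrix.det_mul, Matrix.det_transpose]
          exact (hP.mul h).mul hP
        exact fun i => Or.inl (hdetconj _ hDA this i)
      · have : IsUnit (Pᵀ * B * P).det := by
          rw [Matrix.det_mul, Matrix.det_mul, Matrix.det_transpose]
          exact (hP.mul h).mul hP
        exact fun i => Or.inr (hdetconj _ hDB this i)
    refine ⟨(μ₁ + μ₂) / 2, (hpd _).2 fun i => ?_⟩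
    have h1 := h₁ i
    have h2 := h₂ i
    rcases lt_or_eq_of_le h1 with h1' | h1'
    · rcases lt_or_eq_of_le h2 with h2' | h2'
      · nlinarith
      · nlinarith
    · rcases lt_or_eq_of_le h2 with h2' | h2'
      · nlinarith
      · -- both zero: a i + μ₁ b i = 0, a i + μ₂ b i = 0 ⇒ b i = 0, a i = 0
        have hb0 : b i = 0 := by
          have : (μ₁ - μ₂) * b i = 0 := by linarith
          have hμ : μ₁ - μ₂ ≠ 0 := sub_ne_zero.2 hne
          exact (mul_eq_zero.1 this).resolve_left hμ
        have ha0 : a i = 0 := by rw [hb0] at h1'; linarith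
        rcases hdet i with h | h
        · exact absurd ha0 h
        · exact absurd hb0 h
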